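/- Let n ≥ 1, λ > 0, let Q be a positive definite n×n complex matrix with Tr(Q²) = Tr(Q⁻²), and let F be an n×n complex matrix with Tr(F*F) = 1. Let e be the orthogonal projection of ℂⁿ ⊗ ℂⁿ onto ℂ·vec(Q) and f the orthogonal projection of ℂⁿ ⊗ ℂⁿ onto ℂ·vec(Fᵗ). If the Jones relation (id_{ℂⁿ} ⊗ f)(e ⊗ id_{ℂⁿ})(id_{ℂⁿ} ⊗ f) = λ·(id_{ℂⁿ} ⊗ f) holds on ℂⁿ ⊗ ℂⁿ ⊗ ℂⁿ, then Tr(Q²) = Tr(Q⁻²) = λ^{−1/2}, and there exists a unitary n×n matrix U such that F = λ^{1/4}·U·Q⁻¹. -/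

import Mathlib

open Matrix
open scoped Kronecker ComplexOrder

noncomputable section

/-- The orthogonal projection of `ℓ²(ι)` onto the line `ℂ·x`, written as a matrix:
for a unit vector `x` it is `x ↦ x p * conj (x q)`; in general one divides by `‖x‖²`. -/
def lineProj {ι : Type*} [Fintype ι] (x : ι → ℂ) : Matrix ι ι ℂ :=
  (∑ p, x p * star (x p))⁻¹ • Matrix.of fun p q => x p * star (x q)

/-- `e ⊗ id` as an operator (matrix) on `ℂⁿ ⊗ ℂⁿ ⊗ ℂⁿ`, identified with
`EuclideanSpace ℂ (Fin n × Fin n × Fin n)` via the standard bases. -/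
def tensorOne (n : ℕ) (e : Matrix (Fin n × Fin n) (Fin n × Fin n) ℂ) :
    Matrix (Fin n × Fin n × Fin n) (Fin n × Fin n × Fin n) ℂ :=
  Matrix.reindex (Equiv.prodAssoc _ _ _) (Equiv.prodAssoc _ _ _)
    (e ⊗ₖ (1 : Matrix (Fin n) (Fin n) ℂ))

/-- `id ⊗ f` as an operator (matrix) on `ℂⁿ ⊗ ℂⁿ ⊗ ℂⁿ`. -/
def oneTensor (n : ℕ) (f : Matrix (Fin n × Fin n) (Fin n × Fin n) ℂ) :
    Matrix (Fin n × Fin n × Fin n) (Fin n × Fin n × Fin n) ℂ :=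
  (1 : Matrix (Fin n) (Fin n) ℂ) ⊗ₖ f

lemma entry_formula (n : ℕ) (Q G : Matrix (Fin n) (Fin n) ℂ) (a b c a'' b'' c'' : Fin n) :
    (oneTensor n (Matrix.of fun p q => G p.1 p.2 * star (G q.1 q.2)) *
      tensorOne n (Matrix.of fun p q => Q p.1 p.2 * star (Q q.1 q.2)) *
      oneTensor n (Matrix.of fun p q => G p.1 p.2 * star (G q.1 q.2)))
      (a, b, c) (a'', b'', c'')
    = G b c * star (G b'' c'') * ((Q * G.map star * Gᵀ * Qᴴ) a a'') := by
  simp [oneTensor, tensorOne, Matrix.mul_apply, Matrix.one_apply, Fintype.sum_prod_type,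
    Finset.mul_sum, Finset.sum_mul, Finset.sum_ite_eq, Finset.sum_ite_eq']
  refine Finset.sum_congr rfl fun x _ => Finset.sum_congr rfl fun y _ =>
    Finset.sum_congr rfl fun z _ => ?_
  ring

lemma tensorOne_smul (n : ℕ) (s : ℂ) (e : Matrix (Fin n × Fin n) (Fin n × Fin n) ℂ) :
    tensorOne n (s • e) = s • tensorOne n e := by
  simp [tensorOne, Matrix.smul_kronecker, Matrix.reindex_apply, Matrix.submatrix_smul]

/-- Let `Q` be positive definite with `Tr(Q²) = Tr(Q⁻²)`, let `F` satisfy `Tr(F*F) = 1`,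
and let `e`, `f` be the orthogonal projections of `ℂⁿ ⊗ ℂⁿ` onto `ℂ·vec Q` and `ℂ·vec Fᵗ`.
If the Jones relation `(id ⊗ f)(e ⊗ id)(id ⊗ f) = λ (id ⊗ f)` holds, then
`Tr(Q²) = Tr(Q⁻²) = λ^(-1/2)` and `F = λ^(1/4)·U·Q⁻¹` for some unitary `U`. -/
theorem stmt13 (n : ℕ) (hn : 0 < n) (lam : ℝ) (hlam : 0 < lam)
    (Q : Matrix (Fin n) (Fin n) ℂ) (hQ : Q.PosDef)
    (hTrQ : Matrix.trace (Q ^ 2) = Matrix.trace (Q⁻¹ ^ 2))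
    (F : Matrix (Fin n) (Fin n) ℂ) (hF : Matrix.trace (Fᴴ * F) = 1)
    (hJones :
      oneTensor n (lineProj fun p => Fᵀ p.1 p.2) *
          tensorOne n (lineProj fun p => Q p.1 p.2) *
          oneTensor n (lineProj fun p => Fᵀ p.1 p.2) =
        (lam : ℂ) • oneTensor n (lineProj fun p => Fᵀ p.1 p.2)) :
    Matrix.trace (Q ^ 2) = ((lam ^ (-(1 : ℝ) / 2) : ℝ) : ℂ) ∧
      Matrix.trace (Q⁻¹ ^ 2) = ((lam ^ (-(1 : ℝ) / 2) : ℝ) : ℂ) ∧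
      ∃ U ∈ Matrix.unitaryGroup (Fin n) ℂ,
        F = ((lam ^ ((1 : ℝ) / 4) : ℝ) : ℂ) • ((U : Matrix (Fin n) (Fin n) ℂ) * Q⁻¹) := by
  have hdet : IsUnit Q.det := hQ.det_pos.ne'.isUnit
  have hherm : Qᴴ = Q := hQ.1
  have hQapp : ∀ a b, Q b a = star (Q a b) := by
    intro a b
    conv_lhs => rw [← hherm]
    simp [Matrix.conjTranspose_apply]
  set T := Matrix.trace (Q ^ 2) with hT
  -- the normalizing scalars
  have hsF : (∑ p : Fin n × Fin n, Fᵀ p.1 p.2 * star (Fᵀ p.1 p.2)) = 1 := by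
    rw [← hF]
    simp only [Matrix.trace, Matrix.diag, Matrix.mul_apply, Matrix.conjTranspose_apply,
      Fintype.sum_prod_type, Matrix.transpose_apply]
    exact Finset.sum_congr rfl fun x _ => Finset.sum_congr rfl fun y _ => by ring
  have hsQ : (∑ p : Fin n × Fin n, Q p.1 p.2 * star (Q p.1 p.2)) = T := by
    rw [hT, pow_two]
    simp only [Matrix.trace, Matrix.diag, Matrix.mul_apply, Fintype.sum_prod_type]
    exact Finset.sum_congr rfl fun x _ => Finset.sum_congr rfl fun y _ => by
      rw [hQapp x y]
  -- T is a positive real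
  obtain ⟨t, htT, ht0⟩ : ∃ t : ℝ, T = (t : ℂ) ∧ 0 < t := by
    refine ⟨∑ p : Fin n × Fin n, Complex.normSq (Q p.1 p.2), ?_, ?_⟩
    · rw [← hsQ]
      push_cast
      exact Finset.sum_congr rfl fun p _ => Complex.mul_conj _
    · have hQne : Q ≠ 0 := by
        intro h
        rw [h] at hdet
        haveI : Nonempty (Fin n) := ⟨⟨0, hn⟩⟩
        simp [Matrix.det_zero] at hdet
      obtain ⟨a, b, hab⟩ : ∃ a b, Q a b ≠ 0 := by
        by_contra h
        push_neg at h
        exact hQne (by ext a b; simp [h a b])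
      exact Finset.sum_pos' (fun p _ => Complex.normSq_nonneg _)
        ⟨(a, b), Finset.mem_univ _, Complex.normSq_pos.2 hab⟩
  have hTne : T ≠ 0 := by rw [htT]; exact_mod_cast ht0.ne'
  -- rewrite the projections
  set f0 : Matrix (Fin n × Fin n) (Fin n × Fin n) ℂ :=
    Matrix.of fun p q => Fᵀ p.1 p.2 * star (Fᵀ q.1 q.2) with hf0
  set e0 : Matrix (Fin n × Fin n) (Fin n × Fin n) ℂ :=
    Matrix.of fun p q => Q p.1 p.2 * star (Q q.1 q.2) with he0
  have hlpf : (lineProj fun p : Fin n × Fin n => Fᵀ p.1 p.2) = f0 := by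
    rw [lineProj, hsF, inv_one, one_smul]
  have hlpe : (lineProj fun p : Fin n × Fin n => Q p.1 p.2) = T⁻¹ • e0 := by
    rw [lineProj, hsQ]
  rw [hlpf, hlpe, tensorOne_smul, Matrix.mul_smul, Matrix.smul_mul] at hJones
  -- extract the matrix identity  Q Fᴴ F Q = (lam T) • 1
  obtain ⟨b, c, hbc⟩ : ∃ b c, Fᵀ b c ≠ 0 := by
    by_contra h
    push_neg at h
    rw [Finset.sum_eq_zero (fun p _ => by rw [h p.1 p.2, zero_mul])] at hsF
    exact one_ne_zero hsF.symm
  have hk : Fᵀ b c * star (Fᵀ b c) ≠ 0 :=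
    mul_ne_zero hbc (star_ne_zero.2 hbc)
  have hM : Q * Fᴴ * F * Q = ((lam : ℂ) * T) • (1 : Matrix (Fin n) (Fin n) ℂ) := by
    ext a a''
    have h := congrFun (congrFun hJones (a, b, c)) (a'', b, c)
    simp only [Matrix.smul_apply, smul_eq_mul] at h
    rw [entry_formula n Q Fᵀ a b c a'' b c] at h
    have hone : oneTensor n f0 (a, b, c) (a'', b, c) =
        (1 : Matrix (Fin n) (Fin n) ℂ) a a'' * (Fᵀ b c * star (Fᵀ b c)) := by
      simp [oneTensor, hf0, Matrix.kroneckerMap_apply]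
    rw [hone] at h
    have hFt : Fᵀ.map star = Fᴴ := rfl
    have hFtt : Fᵀᵀ = F := Matrix.transpose_transpose F
    rw [hFt, hFtt, hherm] at h
    have h3 : Fᵀ b c * star (Fᵀ b c) * ((Q * Fᴴ * F * Q) a a'') =
        T * ((lam : ℂ) * ((1 : Matrix (Fin n) (Fin n) ℂ) a a'' * (Fᵀ b c * star (Fᵀ b c)))) := by
      rw [← h, ← mul_assoc, mul_inv_cancel₀ hTne, one_mul]
    simp only [Matrix.smul_apply, smul_eq_mul]
    refine mul_left_cancel₀ hk ?_
    rw [h3]; ring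
  -- deduce Fᴴ F = (lam T) • Q⁻¹ Q⁻¹
  have hkey : Fᴴ * F = ((lam : ℂ) * T) • (Q⁻¹ * Q⁻¹) := by
    have h := congrArg (fun X => Q⁻¹ * X * Q⁻¹) hM
    simp only [Matrix.mul_smul, Matrix.smul_mul, Matrix.mul_one] at h
    calc Fᴴ * F = Q⁻¹ * (Q * (Fᴴ * F * Q)) * Q⁻¹ := by
          rw [Matrix.nonsing_inv_mul_cancel_left _ _ hdet, Matrix.mul_assoc,
            Matrix.mul_nonsing_inv _ hdet, Matrix.mul_one]
      _ = Q⁻¹ * (Q * Fᴴ * F * Q) * Q⁻¹ := by noncomm_ring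
      _ = ((lam : ℂ) * T) • (Q⁻¹ * Q⁻¹) := by rw [h]
  -- trace identity
  have htr : 1 = (lam : ℂ) * T * Matrix.trace (Q⁻¹ ^ 2) := by
    rw [← hF, hkey, Matrix.trace_smul, pow_two, smul_eq_mul]
  have hlamT : (lam : ℂ) * T * T = 1 := by
    rw [htr, ← hTrQ]
  have hlt : lam * t ^ 2 = 1 := by
    have : ((lam * t ^ 2 : ℝ) : ℂ) = 1 := by
      push_cast
      rw [← htT]
      linear_combination hlamT
    exact_mod_cast this
  have htval : t = lam ^ (-(1 : ℝ) / 2) := by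
    have hpos : (0:ℝ) < lam ^ (-(1 : ℝ) / 2) := Real.rpow_pos_of_pos hlam _
    have hsq : (lam ^ (-(1 : ℝ) / 2)) ^ 2 = lam⁻¹ := by
      rw [← Real.rpow_natCast (lam ^ (-(1:ℝ)/2)) 2, ← Real.rpow_mul hlam.le]
      norm_num
      exact Real.rpow_neg_one lam
    have ht2 : t ^ 2 = lam⁻¹ := by
      field_simp
      linarith [hlt]
    have : t = Real.sqrt (t ^ 2) := (Real.sqrt_sq ht0.le).symm
    rw [this, ht2, ← hsq, Real.sqrt_sq hpos.le]
  have hTval : T = ((lam ^ (-(1 : ℝ) / 2) : ℝ) : ℂ) := by rw [htT, htval]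
  refine ⟨hTval, by rw [← hTrQ]; exact hTval, ?_⟩
  -- the unitary
  set c4 : ℂ := ((lam ^ (-(1 : ℝ) / 4) : ℝ) : ℂ) with hc4
  refine ⟨c4 • (F * Q), ?_, ?_⟩
  · rw [Matrix.mem_unitaryGroup_iff']
    have hstar : star (c4 • (F * Q)) = c4 • (Q * Fᴴ) := by
      simp [Matrix.star_eq_conjTranspose, Matrix.conjTranspose_smul, hc4,
        Matrix.conjTranspose_mul, hherm, Complex.star_def, Complex.conj_ofReal]
    rw [hstar, Matrix.smul_mul, Matrix.mul_smul, smul_smul]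
    have hassoc : Q * Fᴴ * (F * Q) = Q * Fᴴ * F * Q := by rw [← Matrix.mul_assoc]
    rw [hassoc, hM, smul_smul, hTval]
    have hr : lam ^ (-(1:ℝ)/4) * lam ^ (-(1:ℝ)/4) * (lam * lam ^ (-(1:ℝ)/2)) = 1 := by
      have h1 : lam ^ (-(1:ℝ)/4) * lam ^ (-(1:ℝ)/4) = lam ^ (-(1:ℝ)/2) := by
        rw [← Real.rpow_add hlam]; norm_num
      have h2 : lam ^ (-(1:ℝ)/2) * lam ^ (-(1:ℝ)/2) = lam⁻¹ := by
        rw [← Real.rpow_add hlam]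
        norm_num
        exact Real.rpow_neg_one lam
      calc lam ^ (-(1:ℝ)/4) * lam ^ (-(1:ℝ)/4) * (lam * lam ^ (-(1:ℝ)/2))
          = (lam ^ (-(1:ℝ)/2) * lam ^ (-(1:ℝ)/2)) * lam := by rw [h1]; ring
        _ = lam⁻¹ * lam := by rw [h2]
        _ = 1 := inv_mul_cancel₀ hlam.ne'
    have hsc : c4 * c4 * ((lam : ℂ) * ((lam ^ (-(1:ℝ)/2) : ℝ) : ℂ)) = 1 := by
      rw [hc4]
      exact_mod_cast congrArg (Complex.ofReal) hr
    rw [hsc, one_smul]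
  · have hQQi : F * Q * Q⁻¹ = F := Matrix.mul_nonsing_inv_cancel_right _ _ hdet
    have h1 : ((lam ^ ((1 : ℝ) / 4) : ℝ) : ℂ) * c4 = 1 := by
      rw [hc4, ← Complex.ofReal_mul, ← Real.rpow_add hlam]
      norm_num
    rw [Matrix.smul_mul, hQQi, smul_smul, h1, one_smul]
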